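/- Let (N_{r,t})_{r≤t} be a skew convolution semigroup associated with (Q_{r,t}) and let G_t(f,·) be the Radon measure on (−∞,t] induced by the non-increasing function r ↦ J_{r,t}(f). Then: (i) if f, g ∈ B(E)^+ and 0 ≤ g ≤ cf pointwise for a constant c ≥ 1, then G_t(g,A) ≤ c·G_t(f,A) for every Borel set A ⊆ (−∞,t]; (ii) for t ≤ u and f ∈ B(E)^+, G_u(f,A) = G_t(V_{t,u}f,A) for every Borel set A ⊆ (−∞,t); (iii) for t ≤ u and f ∈ B(E)^+, the restriction of G_u(f,·) to (−∞,t) is absolutely continuous with respect to the restriction of G_t(1,·) to (−∞,t). -/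

import Mathlib

open MeasureTheory ProbabilityTheory Filter Topology
open scoped ENNReal NNReal

set_option linter.unusedSectionVars false
set_option maxHeartbeats 1000000

noncomputable section

variable {E : Type*} [TopologicalSpace E] [MeasurableSpace E] [BorelSpace E]
  [StandardBorelSpace E]

/-- The Borel σ-algebra of the topology of weak convergence on `M(E)`. -/
instance : MeasurableSpace (FiniteMeasure E) := borel _

/-- `B(E)^+`: bounded non-negative Borel functions on `E`. -/
def Bp (f : E → ℝ) : Prop :=
  Measurable f ∧ (∀ x, 0 ≤ f x) ∧ ∃ C, ∀ x, f x ≤ C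

/-- The Laplace functional `L_F(f) = ∫_{M(E)} e^{-ν(f)} F(dν)`. -/
def lap (F : Measure (FiniteMeasure E)) (f : E → ℝ) : ℝ :=
  ∫ ν, Real.exp (- ∫ x, f x ∂(ν : Measure E)) ∂F

/-- Convolution of two measures on `M(E)`: the image of `F ⊗ G` under `(μ, ν) ↦ μ + ν`. -/
def conv (F G : Measure (FiniteMeasure E)) : Measure (FiniteMeasure E) :=
  (F.prod G).map (fun p => p.1 + p.2)

/-- The functional `J_{r,t}(f) = -log L_{N_{r,t}}(f)`. -/
def Jfun (N : ℝ → ℝ → Measure (FiniteMeasure E)) (r t : ℝ) (f : E → ℝ) : ℝ :=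
  - Real.log (lap (N r t) f)

namespace SCSAux

open Set

def hexp (f : E → ℝ) (ν : FiniteMeasure E) : ℝ := Real.exp (- ∫ x, f x ∂(ν : Measure E))

lemma lap_eq (F : Measure (FiniteMeasure E)) (f : E → ℝ) : lap F f = ∫ ν, hexp f ν ∂F := rfl

lemma bp_integrable {f : E → ℝ} (hf : Bp f) (ν : Measure E) [IsFiniteMeasure ν] :
    Integrable f ν := by
  obtain ⟨hm, hnn, C, hC⟩ := hf
  refine ⟨hm.stronglyMeasurable.aestronglyMeasurable, ?_⟩
  exact HasFiniteIntegral.of_bounded (C := C)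
    (ae_of_all _ fun x => by rw [Real.norm_eq_abs, abs_of_nonneg (hnn x)]; exact hC x)

lemma bp_integral_nonneg {f : E → ℝ} (hf : Bp f) (ν : Measure E) :
    0 ≤ ∫ x, f x ∂ν := MeasureTheory.integral_nonneg hf.2.1

lemma hexp_pos (f : E → ℝ) (ν : FiniteMeasure E) : 0 < hexp f ν := Real.exp_pos _

lemma hexp_le_one {f : E → ℝ} (hf : Bp f) (ν : FiniteMeasure E) : hexp f ν ≤ 1 :=
  Real.exp_le_one_iff.2 (neg_nonpos.2 (bp_integral_nonneg hf _))

lemma aesm_of_lap_ne_zero {F : Measure (FiniteMeasure E)} {f : E → ℝ} (h : lap F f ≠ 0) :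
    AEStronglyMeasurable (fun ν => hexp f ν) F := by
  by_contra hn
  exact h (integral_undef fun hi => hn hi.1)

lemma integrable_hexp {F : Measure (FiniteMeasure E)} [IsFiniteMeasure F] {f : E → ℝ}
    (hf : Bp f) (h : lap F f ≠ 0) : Integrable (fun ν => hexp f ν) F := by
  refine ⟨aesm_of_lap_ne_zero h, ?_⟩
  exact HasFiniteIntegral.of_bounded (C := 1) (ae_of_all _ fun ν => by
    rw [Real.norm_eq_abs, abs_of_pos (hexp_pos f ν)]; exact hexp_le_one hf ν)

lemma lint_hexp (P : Measure (FiniteMeasure E)) {g : E → ℝ}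
    (hI : Integrable (fun ν => hexp g ν) P) :
    ∫⁻ ν, ENNReal.ofReal (hexp g ν) ∂P = ENNReal.ofReal (lap P g) := by
  rw [lap_eq, ← ofReal_integral_eq_lintegral_ofReal hI
    (ae_of_all _ fun ν => (hexp_pos g ν).le)]

lemma lap_decomp
    (Q : ℝ → ℝ → Kernel (FiniteMeasure E) (FiniteMeasure E))
    (V : ℝ → ℝ → (E → ℝ) → E → ℝ)
    (N : ℝ → ℝ → Measure (FiniteMeasure E))
    (hQmar : ∀ r t, r ≤ t → IsMarkovKernel (Q r t))
    (hQlap : ∀ r t, r ≤ t → ∀ (μ : FiniteMeasure E) f, Bp f →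
      lap ((Q r t) μ) f = Real.exp (- ∫ x, V r t f x ∂(μ : Measure E)))
    (hVBp : ∀ r t f, r ≤ t → Bp f → Bp (V r t f))
    (hN : ∀ r t, r ≤ t → IsProbabilityMeasure (N r t))
    (hpos : ∀ r t f, r ≤ t → Bp f → 0 < lap (N r t) f)
    (hSCS : ∀ r s t, r ≤ s → s ≤ t → N r t = conv ((N r s).bind (Q s t ·)) (N s t))
    {u v t : ℝ} (huv : u ≤ v) (hvt : v ≤ t) {f : E → ℝ} (hf : Bp f) :
    lap (N u t) f = lap (N u v) (V v t f) * lap (N v t) f := by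
  have hut : u ≤ t := le_trans huv hvt
  haveI := hN u v huv; haveI := hN v t hvt; haveI := hN u t hut
  haveI := hQmar v t hvt
  set F : Measure (FiniteMeasure E) := (N u v).bind (Q v t ·) with hF
  have hkm : Measurable (fun μ : FiniteMeasure E => (Q v t) μ) := (Q v t).measurable
  haveI hFprob : IsProbabilityMeasure F := by
    constructor
    rw [hF, Measure.bind_apply MeasurableSet.univ hkm.aemeasurable]
    simp [measure_univ]
  set h : FiniteMeasure E → ℝ≥0∞ := fun ν => ENNReal.ofReal (hexp f ν) with hh
  have hmul : ∀ μ ν : FiniteMeasure E, h (μ + ν) = h μ * h ν := by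
    intro μ ν
    have he : hexp f (μ + ν) = hexp f μ * hexp f ν := by
      unfold hexp
      rw [FiniteMeasure.toMeasure_add,
        integral_add_measure (bp_integrable hf _) (bp_integrable hf _), neg_add, Real.exp_add]
    simp only [hh, he, ENNReal.ofReal_mul (hexp_pos f μ).le]
  have hscs : N u t = (F.prod (N v t)).map (fun p => p.1 + p.2) := hSCS u v t huv hvt
  have hadd : AEMeasurable (fun p : FiniteMeasure E × FiniteMeasure E => p.1 + p.2)
      (F.prod (N v t)) := by
    by_contra hn
    have h0 : N u t = 0 := by rw [hscs]; exact Measure.map_of_not_aemeasurable hn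
    exact (IsProbabilityMeasure.ne_zero (N u t)) h0
  have hhN : AEMeasurable h (N u t) := by
    have := aesm_of_lap_ne_zero (ne_of_gt (hpos u t f hut hf))
    exact ENNReal.measurable_ofReal.comp_aemeasurable this.aemeasurable
  have hhmap : AEMeasurable h
      ((F.prod (N v t)).map (fun p : FiniteMeasure E × FiniteMeasure E => p.1 + p.2)) := by
    rw [← hscs]; exact hhN
  have hhprod : AEMeasurable (fun p : FiniteMeasure E × FiniteMeasure E => h (p.1 + p.2))
      (F.prod (N v t)) := hhmap.comp_aemeasurable hadd
  -- a.e. measurability of h with respect to F, via sections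
  have hhF : AEMeasurable h F := by
    have hswap : ((N v t).prod F).map Prod.swap = F.prod (N v t) := Measure.prod_swap
    have hH2 : AEMeasurable (fun q : FiniteMeasure E × FiniteMeasure E => h (q.2 + q.1))
        ((N v t).prod F) := by
      have h1 : AEMeasurable (fun p : FiniteMeasure E × FiniteMeasure E => h (p.1 + p.2))
          (((N v t).prod F).map Prod.swap) := by rw [hswap]; exact hhprod
      exact h1.comp_aemeasurable measurable_swap.aemeasurable
    set K := hH2.mk _ with hK
    have heq : (fun q : FiniteMeasure E × FiniteMeasure E => h (q.2 + q.1))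
        =ᵐ[(N v t).prod F] K := hH2.ae_eq_mk
    have hae : ∀ᵐ ν ∂(N v t), ∀ᵐ μ ∂F, h (μ + ν) = K (ν, μ) :=
      Measure.ae_ae_of_ae_prod heq
    haveI : (ae (N v t)).NeBot := ae_neBot.mpr (IsProbabilityMeasure.ne_zero _)
    obtain ⟨ν₀, hν₀⟩ := hae.exists
    have hv0 : h ν₀ ≠ 0 := by
      simp only [hh, ne_eq, ENNReal.ofReal_eq_zero, not_le]
      exact hexp_pos f ν₀
    have hvt' : h ν₀ ≠ ∞ := ENNReal.ofReal_ne_top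
    refine ⟨fun μ => K (ν₀, μ) * (h ν₀)⁻¹,
      (hH2.measurable_mk.comp measurable_prodMk_left).mul_const _, ?_⟩
    filter_upwards [hν₀] with μ hμ
    rw [← hμ, hmul, mul_assoc, ENNReal.mul_inv_cancel hv0 hvt', mul_one]
  -- the chain of equalities on lintegrals
  have step1 : ENNReal.ofReal (lap (N u t) f) = ∫⁻ ν, h ν ∂(N u t) :=
    (lint_hexp _ (integrable_hexp hf (ne_of_gt (hpos u t f hut hf)))).symm
  have step2 : ∫⁻ ν, h ν ∂(N u t)
      = ∫⁻ p : FiniteMeasure E × FiniteMeasure E, h (p.1 + p.2) ∂(F.prod (N v t)) := by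
    rw [hscs]; exact lintegral_map' hhmap hadd
  have step3 : ∫⁻ p : FiniteMeasure E × FiniteMeasure E, h (p.1 + p.2) ∂(F.prod (N v t))
      = ∫⁻ μ, ∫⁻ ν, h (μ + ν) ∂(N v t) ∂F := MeasureTheory.lintegral_prod _ hhprod
  have hCne : ENNReal.ofReal (lap (N v t) f) ≠ ∞ := ENNReal.ofReal_ne_top
  have step4 : ∫⁻ μ, ∫⁻ ν, h (μ + ν) ∂(N v t) ∂F
      = (∫⁻ μ, h μ ∂F) * ENNReal.ofReal (lap (N v t) f) := by
    have hinner : ∀ μ, ∫⁻ ν, h (μ + ν) ∂(N v t) = h μ * ENNReal.ofReal (lap (N v t) f) := by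
      intro μ
      simp only [hmul]
      rw [lintegral_const_mul' _ _ ENNReal.ofReal_ne_top,
        lint_hexp _ (integrable_hexp hf (ne_of_gt (hpos v t f hvt hf)))]
    simp only [hinner]
    exact lintegral_mul_const' _ _ hCne
  -- compute ∫⁻ h dF
  have stepF : ∫⁻ μ, h μ ∂F = ENNReal.ofReal (lap (N u v) (V v t f)) := by
    have hBp' : Bp (V v t f) := hVBp v t f hvt hf
    set h' := hhF.mk h with hh'
    have hS : F {ν | ¬ h ν = h' ν} = 0 := ae_iff.mp hhF.ae_eq_mk
    set T := toMeasurable F {ν | ¬ h ν = h' ν} with hT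
    have hTmeas : MeasurableSet T := measurableSet_toMeasurable _ _
    have hTF : F T = 0 := by rw [hT, measure_toMeasurable]; exact hS
    have hbindT : ∫⁻ μ, (Q v t) μ T ∂(N u v) = 0 := by
      rw [← Measure.bind_apply hTmeas hkm.aemeasurable, ← hF]; exact hTF
    have haeQ : ∀ᵐ μ ∂(N u v), (Q v t) μ T = 0 := by
      have hmeasT : Measurable fun μ => (Q v t) μ T := (Q v t).measurable_coe hTmeas
      have := (lintegral_eq_zero_iff hmeasT).mp hbindT
      filter_upwards [this] with μ hμ using hμ
    have inner_eq : ∀ᵐ μ ∂(N u v),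
        ∫⁻ ν, h' ν ∂((Q v t) μ) = ENNReal.ofReal (hexp (V v t f) μ) := by
      filter_upwards [haeQ] with μ hμ
      have hQS : (Q v t) μ {ν | ¬ h ν = h' ν} = 0 :=
        measure_mono_null (subset_toMeasurable _ _) hμ
      have hae2 : h' =ᵐ[(Q v t) μ] h := by
        rw [EventuallyEq, ae_iff]
        refine measure_mono_null (fun ν hν => ?_) hQS
        simp only [Set.mem_setOf_eq] at hν ⊢
        exact fun hc => hν hc.symm
      rw [lintegral_congr_ae hae2]
      have hQpos : lap ((Q v t) μ) f ≠ 0 := by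
        rw [hQlap v t hvt μ f hf]; exact (Real.exp_pos _).ne'
      rw [lint_hexp _ (integrable_hexp hf hQpos), hQlap v t hvt μ f hf]
      rfl
    calc ∫⁻ μ, h μ ∂F = ∫⁻ μ, h' μ ∂F := lintegral_congr_ae hhF.ae_eq_mk
      _ = ∫⁻ μ, ∫⁻ ν, h' ν ∂((Q v t) μ) ∂(N u v) := by
          rw [hF]; exact Measure.lintegral_bind hkm.aemeasurable hhF.measurable_mk.aemeasurable
      _ = ∫⁻ μ, ENNReal.ofReal (hexp (V v t f) μ) ∂(N u v) := lintegral_congr_ae inner_eq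
      _ = ENNReal.ofReal (lap (N u v) (V v t f)) :=
          lint_hexp _ (integrable_hexp hBp' (ne_of_gt (hpos u v _ huv hBp')))
  have final : ENNReal.ofReal (lap (N u t) f)
      = ENNReal.ofReal (lap (N u v) (V v t f) * lap (N v t) f) := by
    rw [step1, step2, step3, step4, stepF,
      ← ENNReal.ofReal_mul (le_of_lt (hpos u v _ huv (hVBp v t f hvt hf)))]
  have h1 : 0 ≤ lap (N u t) f := (hpos u t f hut hf).le
  have h2 : 0 ≤ lap (N u v) (V v t f) * lap (N v t) f :=
    mul_nonneg (hpos u v _ huv (hVBp v t f hvt hf)).le (hpos v t f hvt hf).le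
  exact (ENNReal.ofReal_eq_ofReal_iff h1 h2).mp final

lemma lap_antitone {F : Measure (FiniteMeasure E)} [IsFiniteMeasure F] {f g : E → ℝ}
    (hf : Bp f) (hg : Bp g) (hle : ∀ x, g x ≤ f x)
    (hif : Integrable (fun ν => hexp f ν) F) (hig : Integrable (fun ν => hexp g ν) F) :
    lap F f ≤ lap F g := by
  rw [lap_eq, lap_eq]
  refine integral_mono hif hig fun ν => ?_
  exact Real.exp_le_exp.2 (neg_le_neg
    (integral_mono (bp_integrable hg _) (bp_integrable hf _) hle))

lemma bp_smul {f : E → ℝ} (hf : Bp f) {c : ℝ} (hc : 0 ≤ c) : Bp (fun x => c * f x) := by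
  obtain ⟨hm, hnn, C, hC⟩ := hf
  exact ⟨hm.const_mul c, fun x => mul_nonneg hc (hnn x),
    ⟨c * C, fun x => mul_le_mul_of_nonneg_left (hC x) hc⟩⟩

lemma bp_one : Bp (fun _ : E => (1 : ℝ)) :=
  ⟨measurable_const, fun _ => zero_le_one, ⟨1, fun _ => le_rfl⟩⟩

lemma hexp_smul {f : E → ℝ} (c : ℝ) (ν : FiniteMeasure E) :
    hexp (fun x => c * f x) ν = (hexp f ν) ^ c := by
  unfold hexp
  have h1 : ∫ x, c * f x ∂(ν : Measure E) = c * ∫ x, f x ∂(ν : Measure E) := by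
    simpa [smul_eq_mul] using integral_smul (μ := (ν : Measure E)) c f
  rw [h1, Real.rpow_def_of_pos (Real.exp_pos _), Real.log_exp]
  ring_nf

/-- Jensen's inequality for the Laplace functional -/
lemma lap_rpow_le {F : Measure (FiniteMeasure E)} [IsProbabilityMeasure F] {f : E → ℝ}
    (hf : Bp f) {c : ℝ} (hc : 1 ≤ c)
    (hif : Integrable (fun ν => hexp f ν) F)
    (hic : Integrable (fun ν => hexp (fun x => c * f x) ν) F) :
    (lap F f) ^ c ≤ lap F (fun x => c * f x) := by
  have hne : NeZero F := ⟨IsProbabilityMeasure.ne_zero F⟩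
  have h := (convexOn_rpow hc).map_average_le
    (f := fun ν : FiniteMeasure E => hexp f ν) (μ := F)
    (ContinuousOn.rpow_const continuousOn_id (fun x _ => Or.inr (by linarith))) isClosed_Ici
    (ae_of_all _ fun ν => (hexp_pos f ν).le) hif ?hgi
  case hgi =>
    refine hic.congr (ae_of_all _ fun ν => ?_)
    simp only [Function.comp]
    rw [hexp_smul]
  rw [average_eq_integral, average_eq_integral] at h
  calc (lap F f) ^ c = (∫ ν, hexp f ν ∂F) ^ c := rfl
    _ ≤ ∫ ν, (hexp f ν) ^ c ∂F := h
    _ = lap F (fun x => c * f x) := by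
        rw [lap_eq]; exact integral_congr_ae (ae_of_all _ fun ν => (hexp_smul c ν).symm)

/-- generic Jensen-type comparison for `-log` of a Laplace functional -/
lemma neg_log_lap_le {F : Measure (FiniteMeasure E)} [IsProbabilityMeasure F]
    {f g : E → ℝ} {c : ℝ} (hf : Bp f) (hg : Bp g) (hc : 1 ≤ c)
    (hle : ∀ x, g x ≤ c * f x)
    (hposf : 0 < lap F f) (hposg : 0 < lap F g)
    (hposc : 0 < lap F (fun x => c * f x)) :
    - Real.log (lap F g) ≤ c * (- Real.log (lap F f)) := by
  have hcf : Bp (fun x => c * f x) := bp_smul hf (by linarith)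
  have h1 : lap F (fun x => c * f x) ≤ lap F g :=
    lap_antitone hcf hg hle (integrable_hexp hcf hposc.ne') (integrable_hexp hg hposg.ne')
  have h2 : (lap F f) ^ c ≤ lap F (fun x => c * f x) :=
    lap_rpow_le hf hc (integrable_hexp hf hposf.ne') (integrable_hexp hcf hposc.ne')
  have h3 : (lap F f) ^ c ≤ lap F g := le_trans h2 h1
  have h4 : Real.log ((lap F f) ^ c) ≤ Real.log (lap F g) :=
    Real.log_le_log (Real.rpow_pos_of_pos hposf c) h3
  rw [Real.log_rpow hposf] at h4
  linarith

end SCSAux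

section Main

open Set SCSAux

variable (Q : ℝ → ℝ → Kernel (FiniteMeasure E) (FiniteMeasure E))
variable (V : ℝ → ℝ → (E → ℝ) → E → ℝ)
variable (N : ℝ → ℝ → Measure (FiniteMeasure E))

/-- pointwise comparison of the cumulant semigroup via Jensen's inequality -/
lemma V_le
    (hQmar : ∀ r t, r ≤ t → IsMarkovKernel (Q r t))
    (hQlap : ∀ r t, r ≤ t → ∀ (μ : FiniteMeasure E) f, Bp f →
      lap ((Q r t) μ) f = Real.exp (- ∫ x, V r t f x ∂(μ : Measure E)))
    (hVBp : ∀ r t f, r ≤ t → Bp f → Bp (V r t f))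
    {r t : ℝ} (hrt : r ≤ t) {f g : E → ℝ} {c : ℝ} (hf : Bp f) (hg : Bp g) (hc : 1 ≤ c)
    (hle : ∀ x, g x ≤ c * f x) : ∀ x, V r t g x ≤ c * V r t f x := by
  intro x
  haveI := hQmar r t hrt
  set δ : FiniteMeasure E := ⟨Measure.dirac x, inferInstance⟩ with hδ
  have hdint : ∀ φ : E → ℝ, Bp φ → ∫ y, φ y ∂(δ : Measure E) = φ x := by
    intro φ hφ
    exact integral_dirac' φ x hφ.1.stronglyMeasurable
  have hposg : 0 < lap ((Q r t) δ) g := by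
    rw [hQlap r t hrt δ g hg]; exact Real.exp_pos _
  have hposf : 0 < lap ((Q r t) δ) f := by
    rw [hQlap r t hrt δ f hf]; exact Real.exp_pos _
  have hcf : Bp (fun y => c * f y) := bp_smul hf (by linarith)
  have hposc : 0 < lap ((Q r t) δ) (fun y => c * f y) := by
    rw [hQlap r t hrt δ _ hcf]; exact Real.exp_pos _
  have key := neg_log_lap_le (F := (Q r t) δ) hf hg hc hle hposf hposg hposc
  rw [hQlap r t hrt δ g hg, hQlap r t hrt δ f hf, Real.log_exp, Real.log_exp] at key
  rw [hdint _ (hVBp r t g hrt hg), hdint _ (hVBp r t f hrt hf)] at key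
  linarith

/-- `J` is nonnegative -/
lemma J_nonneg
    (hN : ∀ r t, r ≤ t → IsProbabilityMeasure (N r t))
    (hpos : ∀ r t f, r ≤ t → Bp f → 0 < lap (N r t) f)
    {r t : ℝ} (hrt : r ≤ t) {f : E → ℝ} (hf : Bp f) : 0 ≤ Jfun N r t f := by
  haveI := hN r t hrt
  have h1 : lap (N r t) f ≤ 1 := by
    have h := norm_integral_le_of_norm_le_const (μ := N r t) (C := 1)
      (f := fun ν : FiniteMeasure E => hexp f ν) (ae_of_all _ fun ν => by
        rw [Real.norm_eq_abs, abs_of_pos (hexp_pos f ν)]; exact hexp_le_one hf ν)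
    rw [probReal_univ, mul_one, Real.norm_eq_abs] at h
    calc lap (N r t) f ≤ |lap (N r t) f| := le_abs_self _
      _ ≤ 1 := h
  have := Real.log_nonpos (hpos r t f hrt hf).le h1
  simp only [Jfun]
  linarith

/-- decomposition of `J` along the skew convolution semigroup -/
lemma J_decomp
    (hQmar : ∀ r t, r ≤ t → IsMarkovKernel (Q r t))
    (hQlap : ∀ r t, r ≤ t → ∀ (μ : FiniteMeasure E) f, Bp f →
      lap ((Q r t) μ) f = Real.exp (- ∫ x, V r t f x ∂(μ : Measure E)))
    (hVBp : ∀ r t f, r ≤ t → Bp f → Bp (V r t f))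
    (hN : ∀ r t, r ≤ t → IsProbabilityMeasure (N r t))
    (hpos : ∀ r t f, r ≤ t → Bp f → 0 < lap (N r t) f)
    (hSCS : ∀ r s t, r ≤ s → s ≤ t → N r t = conv ((N r s).bind (Q s t ·)) (N s t))
    {u v t : ℝ} (huv : u ≤ v) (hvt : v ≤ t) {f : E → ℝ} (hf : Bp f) :
    Jfun N u t f = Jfun N u v (V v t f) + Jfun N v t f := by
  have h := lap_decomp Q V N hQmar hQlap hVBp hN hpos hSCS huv hvt hf
  simp only [Jfun]
  rw [h, Real.log_mul (hpos u v _ huv (hVBp v t f hvt hf)).ne' (hpos v t f hvt hf).ne']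
  ring

/-- Jensen comparison for `J` -/
lemma J_le_smul
    (hN : ∀ r t, r ≤ t → IsProbabilityMeasure (N r t))
    (hpos : ∀ r t f, r ≤ t → Bp f → 0 < lap (N r t) f)
    {r t : ℝ} (hrt : r ≤ t) {f g : E → ℝ} {c : ℝ} (hf : Bp f) (hg : Bp g) (hc : 1 ≤ c)
    (hle : ∀ x, g x ≤ c * f x) :
    Jfun N r t g ≤ c * Jfun N r t f := by
  haveI := hN r t hrt
  have hcf : Bp (fun x => c * f x) := bp_smul hf (by linarith)
  exact neg_log_lap_le hf hg hc hle (hpos r t f hrt hf) (hpos r t g hrt hg)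
    (hpos r t _ hrt hcf)

/-- Two measures on `ℝ`, finite on compacts, agreeing on all `Ioc a b` with `b < t`,
agree when restricted to `Iio t`. -/
lemma restrict_Iio_eq {μ ν : Measure ℝ} (hμ : IsFiniteMeasureOnCompacts μ)
    (hν : IsFiniteMeasureOnCompacts ν) (t : ℝ)
    (h : ∀ a b, a ≤ b → b < t → μ (Set.Ioc a b) = ν (Set.Ioc a b)) :
    μ.restrict (Set.Iio t) = ν.restrict (Set.Iio t) := by
  have hIoo : ∀ a, a < t → μ (Set.Ioo a t) = ν (Set.Ioo a t) := by
    intro a hat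
    set s : ℕ → Set ℝ := fun n => Set.Ioc a (t - (t - a) / (n + 1)) with hs
    have hmono : Monotone s := by
      intro m n hmn
      apply Set.Ioc_subset_Ioc_right
      have hm1 : (0:ℝ) < (m:ℝ) + 1 := by positivity
      have h2 : (t - a) / ((n:ℝ) + 1) ≤ (t - a) / ((m:ℝ) + 1) := by
        apply div_le_div_of_nonneg_left (by linarith) hm1
        exact_mod_cast Nat.succ_le_succ hmn
      linarith
    have hU : (⋃ n, s n) = Set.Ioo a t := by
      ext x
      simp only [Set.mem_iUnion, hs, Set.mem_Ioc, Set.mem_Ioo]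
      constructor
      · rintro ⟨n, hx1, hx2⟩
        refine ⟨hx1, lt_of_le_of_lt hx2 ?_⟩
        have hp : 0 < (t - a) / ((n:ℝ) + 1) := div_pos (by linarith) (by positivity)
        linarith
      · rintro ⟨hx1, hx2⟩
        obtain ⟨n, hn⟩ := exists_nat_gt ((t - a) / (t - x))
        refine ⟨n, hx1, ?_⟩
        have htx : 0 < t - x := by linarith
        have h3 : (t - a) / (t - x) < (n:ℝ) + 1 := by linarith
        have h5 : t - a < (t - x) * ((n:ℝ) + 1) := by
          have h6 : ((t - a) / (t - x)) * (t - x) < ((n:ℝ) + 1) * (t - x) :=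
            mul_lt_mul_of_pos_right h3 htx
          rw [div_mul_cancel₀ _ htx.ne'] at h6
          linarith [h6]
        have h4 : (t - a) / ((n:ℝ) + 1) < t - x := by
          rw [div_lt_iff₀ (by positivity)]
          linarith
        linarith
    have hd := hmono.directed_le
    rw [← hU, hd.measure_iUnion, hd.measure_iUnion]
    congr 1
    funext n
    apply h
    · have hp : (t - a) / ((n:ℝ) + 1) ≤ t - a := by
        apply div_le_self (by linarith)
        have : (0:ℝ) ≤ (n:ℝ) := Nat.cast_nonneg n
        linarith
      linarith
    · have hp : 0 < (t - a) / ((n:ℝ) + 1) := div_pos (by linarith) (by positivity)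
      linarith
  apply Measure.ext_of_Ioc
  intro a b hab
  rw [Measure.restrict_apply measurableSet_Ioc, Measure.restrict_apply measurableSet_Ioc]
  rcases lt_or_ge b t with hbt | htb
  · have hsub : Set.Ioc a b ∩ Set.Iio t = Set.Ioc a b := by
      apply Set.inter_eq_self_of_subset_left
      exact fun x hx => lt_of_le_of_lt hx.2 hbt
    rw [hsub]
    exact h a b hab.le hbt
  · have hset : Set.Ioc a b ∩ Set.Iio t = Set.Ioo a t := by
      ext x
      simp only [Set.mem_inter_iff, Set.mem_Ioc, Set.mem_Ioo, Set.mem_Iio]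
      constructor
      · rintro ⟨⟨h1, _⟩, h3⟩; exact ⟨h1, h3⟩
      · rintro ⟨h1, h3⟩; exact ⟨⟨h1, le_trans h3.le htb⟩, h3⟩
    rw [hset]
    rcases lt_or_ge a t with hat | hta
    · exact hIoo a hat
    · rw [Set.Ioo_eq_empty (not_lt.2 hta)]
      simp

/-- the running supremum of `J` over `(r, t]` -/
def Ssup (N : ℝ → ℝ → Measure (FiniteMeasure E)) (t : ℝ) (φ : E → ℝ) (r : ℝ) : ℝ :=
  ⨆ u : (Set.Ioc r t : Set ℝ), Jfun N (u : ℝ) t φ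

section SsupFacts

variable {N : ℝ → ℝ → Measure (FiniteMeasure E)}

lemma Ssup_bddAbove (hJmono : ∀ (u v t' : ℝ) (φ : E → ℝ), u ≤ v → v ≤ t' → Bp φ →
      Jfun N v t' φ ≤ Jfun N u t' φ) {t' r : ℝ} {φ : E → ℝ} (hφ : Bp φ) :
    BddAbove (Set.range fun u : (Set.Ioc r t' : Set ℝ) => Jfun N (u : ℝ) t' φ) := by
  refine ⟨Jfun N r t' φ, ?_⟩
  rintro x ⟨⟨u, hu⟩, rfl⟩
  exact hJmono r u t' φ hu.1.le hu.2 hφ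

lemma le_Ssup (hJmono : ∀ (u v t' : ℝ) (φ : E → ℝ), u ≤ v → v ≤ t' → Bp φ →
      Jfun N v t' φ ≤ Jfun N u t' φ) {t' r u : ℝ} {φ : E → ℝ} (hφ : Bp φ) (hu : u ∈ Set.Ioc r t') :
    Jfun N u t' φ ≤ Ssup N t' φ r :=
  le_ciSup (Ssup_bddAbove hJmono hφ) (⟨u, hu⟩ : (Set.Ioc r t' : Set ℝ))

lemma Ssup_le {t' r : ℝ} (hr : r < t') {φ : E → ℝ} {M : ℝ}
    (hM : ∀ u, u ∈ Set.Ioc r t' → Jfun N u t' φ ≤ M) : Ssup N t' φ r ≤ M := by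
  haveI : Nonempty (Set.Ioc r t' : Set ℝ) := Set.nonempty_Ioc_subtype hr
  exact ciSup_le fun u => hM u u.2

lemma Ssup_anti (hJmono : ∀ (u v t' : ℝ) (φ : E → ℝ), u ≤ v → v ≤ t' → Bp φ →
      Jfun N v t' φ ≤ Jfun N u t' φ) {t' a b : ℝ} (hab : a ≤ b) (hbt : b < t') {φ : E → ℝ} (hφ : Bp φ) :
    Ssup N t' φ b ≤ Ssup N t' φ a :=
  Ssup_le hbt fun u hu => le_Ssup hJmono hφ ⟨lt_of_le_of_lt hab hu.1, hu.2⟩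

lemma Ssup_nonneg (hJmono : ∀ (u v t' : ℝ) (φ : E → ℝ), u ≤ v → v ≤ t' → Bp φ →
      Jfun N v t' φ ≤ Jfun N u t' φ) (hJ0 : ∀ (r t' : ℝ) (φ : E → ℝ), r ≤ t' → Bp φ → 0 ≤ Jfun N r t' φ)
    {t' r : ℝ} (hr : r < t') {φ : E → ℝ} (hφ : Bp φ) : 0 ≤ Ssup N t' φ r :=
  le_trans (hJ0 t' t' φ le_rfl hφ) (le_Ssup hJmono hφ ⟨hr, le_rfl⟩)

end SsupFacts



/-- **Lemma 3.2.** Properties of the Radon measures `G_t(f,·)` on `(-∞,t]` induced by the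
non-increasing functions `r ↦ J_{r,t}(f)` of a skew convolution semigroup:
(i) domination, (ii) compatibility via the cumulant semigroup on `(-∞,t)`, and
(iii) absolute continuity with respect to `G_t(1,·)` on `(-∞,t)`. -/
theorem G_measure_properties
    (Q : ℝ → ℝ → Kernel (FiniteMeasure E) (FiniteMeasure E))
    (V : ℝ → ℝ → (E → ℝ) → E → ℝ)
    (hQmar : ∀ r t, r ≤ t → IsMarkovKernel (Q r t))
    (hQid : ∀ t, Q t t = Kernel.id)
    (hQsem : ∀ r s t, r ≤ s → s ≤ t → ∀ μ, (Q r t) μ = ((Q r s) μ).bind (Q s t ·))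
    (hVBp : ∀ r t f, r ≤ t → Bp f → Bp (V r t f))
    (hVsem : ∀ r s t f, r ≤ s → s ≤ t → Bp f → V r s (V s t f) = V r t f)
    (hQlap : ∀ r t, r ≤ t → ∀ (μ : FiniteMeasure E) f, Bp f →
      lap ((Q r t) μ) f = Real.exp (- ∫ x, V r t f x ∂(μ : Measure E)))
    (N : ℝ → ℝ → Measure (FiniteMeasure E))
    (hN : ∀ r t, r ≤ t → IsProbabilityMeasure (N r t))
    (hpos : ∀ r t f, r ≤ t → Bp f → 0 < lap (N r t) f)
    (hSCS : ∀ r s t, r ≤ s → s ≤ t → N r t = conv ((N r s).bind (Q s t ·)) (N s t))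
    (G : ℝ → (E → ℝ) → Measure ℝ)
    (hGfin : ∀ t f, Bp f → IsFiniteMeasureOnCompacts (G t f))
    (hGsupp : ∀ t f, Bp f → G t f (Set.Ioi t) = 0)
    (hGioc : ∀ t f, Bp f → ∀ r s, r ≤ s → s < t →
      G t f (Set.Ioc r s)
        = ENNReal.ofReal
            ((⨆ u : (Set.Ioc r t : Set ℝ), Jfun N (u : ℝ) t f)
              - (⨆ v : (Set.Ioc s t : Set ℝ), Jfun N (v : ℝ) t f)))
    (hGatom : ∀ t f, Bp f →
      G t f {t} = ENNReal.ofReal (⨅ r : (Set.Iio t : Set ℝ), Jfun N (r : ℝ) t f)) :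
    (∀ (t : ℝ) (f g : E → ℝ) (c : ℝ), Bp f → Bp g → 1 ≤ c → (∀ x, g x ≤ c * f x) →
      ∀ A : Set ℝ, MeasurableSet A → A ⊆ Set.Iic t →
        G t g A ≤ ENNReal.ofReal c * G t f A) ∧
    (∀ (t u : ℝ) (f : E → ℝ), t ≤ u → Bp f →
      ∀ A : Set ℝ, MeasurableSet A → A ⊆ Set.Iio t → G u f A = G t (V t u f) A) ∧
    (∀ (t u : ℝ) (f : E → ℝ), t ≤ u → Bp f →
      (G u f).restrict (Set.Iio t) ≪ (G t (fun _ => (1 : ℝ))).restrict (Set.Iio t)) := by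
  -- global monotonicity and positivity facts for `J`
  have hJmono : ∀ (u v t' : ℝ) (φ : E → ℝ), u ≤ v → v ≤ t' → Bp φ →
      Jfun N v t' φ ≤ Jfun N u t' φ := by
    intro u v t' φ huv hvt hφ
    rw [J_decomp Q V N hQmar hQlap hVBp hN hpos hSCS huv hvt hφ]
    have h0 := J_nonneg N hN hpos huv (hVBp v t' φ hvt hφ)
    linarith
  have hJ0 : ∀ (r t' : ℝ) (φ : E → ℝ), r ≤ t' → Bp φ → 0 ≤ Jfun N r t' φ :=
    fun r t' φ h hφ => J_nonneg N hN hpos h hφ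
  have hGS : ∀ (t' : ℝ) (φ : E → ℝ), Bp φ → ∀ a b, a ≤ b → b < t' →
      G t' φ (Set.Ioc a b) = ENNReal.ofReal (Ssup N t' φ a - Ssup N t' φ b) := by
    intro t' φ hφ a b hab hbt
    rw [hGioc t' φ hφ a b hab hbt]; rfl
  have hJincr : ∀ (t' : ℝ) (f g : E → ℝ) (c : ℝ), Bp f → Bp g → 1 ≤ c →
      (∀ x, g x ≤ c * f x) → ∀ u v, u ≤ v → v ≤ t' →
      Jfun N u t' g - Jfun N v t' g ≤ c * (Jfun N u t' f - Jfun N v t' f) := by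
    intro t' f g c hf hg hc hle u v huv hvt
    rw [J_decomp Q V N hQmar hQlap hVBp hN hpos hSCS huv hvt hg,
        J_decomp Q V N hQmar hQlap hVBp hN hpos hSCS huv hvt hf]
    have hVle := V_le Q V hQmar hQlap hVBp hvt hf hg hc hle
    have h1 := J_le_smul N hN hpos huv (hVBp v t' f hvt hf) (hVBp v t' g hvt hg) hc hVle
    linarith
  -- part (i)
  have hi : ∀ (t : ℝ) (f g : E → ℝ) (c : ℝ), Bp f → Bp g → 1 ≤ c → (∀ x, g x ≤ c * f x) →
      ∀ A : Set ℝ, MeasurableSet A → A ⊆ Set.Iic t →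
        G t g A ≤ ENNReal.ofReal c * G t f A := by
    intro t f g c hf hg hc hle A hA hAt
    have hc0 : (0:ℝ) < c := lt_of_lt_of_le one_pos hc
    -- increment inequality at the level of suprema
    have hSincr : ∀ a b, a ≤ b → b < t →
        Ssup N t g a - Ssup N t g b ≤ c * (Ssup N t f a - Ssup N t f b) := by
      intro a b hab hbt
      have hat : a < t := lt_of_le_of_lt hab hbt
      have key : ∀ ε : ℝ, 0 < ε →
          Ssup N t g a ≤ Ssup N t g b + c * (Ssup N t f a - Ssup N t f b) + c * ε := by
        intro ε hε
        haveI : Nonempty (Set.Ioc b t : Set ℝ) := Set.nonempty_Ioc_subtype hbt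
        have hlt : Ssup N t f b - ε < Ssup N t f b := by linarith
        obtain ⟨v, hv⟩ := exists_lt_of_lt_ciSup hlt
        apply Ssup_le hat
        intro w hw
        rcases le_or_gt w (v:ℝ) with hwv | hvw
        · have hIncr := hJincr t f g c hf hg hc hle w (v:ℝ) hwv v.2.2
          have h1 : Jfun N (v:ℝ) t g ≤ Ssup N t g b := le_Ssup hJmono hg v.2
          have h2 : Jfun N w t f ≤ Ssup N t f a := le_Ssup hJmono hf hw
          have h3 : c * (Jfun N w t f - Jfun N (v:ℝ) t f)
              ≤ c * (Ssup N t f a - (Ssup N t f b - ε)) :=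
            mul_le_mul_of_nonneg_left (by linarith) hc0.le
          rw [mul_sub] at h3
          rw [mul_sub]
          rw [mul_sub] at hIncr
          linarith
        · have h1 : Jfun N w t g ≤ Jfun N (v:ℝ) t g := hJmono (v:ℝ) w t g hvw.le hw.2 hg
          have h2 : Jfun N (v:ℝ) t g ≤ Ssup N t g b := le_Ssup hJmono hg v.2
          have h3 : Ssup N t f b ≤ Ssup N t f a := Ssup_anti hJmono hab hbt hf
          have h4 : 0 ≤ c * (Ssup N t f a - Ssup N t f b) := mul_nonneg hc0.le (by linarith)
          have h5 : 0 ≤ c * ε := mul_nonneg hc0.le hε.le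
          linarith
      have h6 : Ssup N t g a ≤ Ssup N t g b + c * (Ssup N t f a - Ssup N t f b) := by
        apply le_of_forall_pos_le_add
        intro ε hε
        have h7 := key (ε / c) (by positivity)
        have h8 : c * (ε / c) = ε := by field_simp
        linarith
      linarith
    -- the compensating Stieltjes measure
    obtain ⟨W0, hW0def⟩ : ∃ W0 : ℝ → ℝ, W0 = fun r => Ssup N t g r - c * Ssup N t f r :=
      ⟨_, rfl⟩
    have hW0mono : ∀ a b, a ≤ b → b < t → W0 a ≤ W0 b := by
      intro a b hab hbt
      have := hSincr a b hab hbt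
      simp only [hW0def]
      linarith
    have hW0le : ∀ r, r < t → W0 r ≤ Ssup N t g (t-1) := by
      intro r hr
      rcases le_or_gt r (t-1) with h1 | h1
      · have h2 := hW0mono r (t-1) h1 (by linarith)
        have h3 : 0 ≤ c * Ssup N t f (t-1) :=
          mul_nonneg hc0.le (Ssup_nonneg hJmono hJ0 (by linarith) hf)
        simp only [hW0def] at h2 ⊢
        linarith
      · have h2 : Ssup N t g r ≤ Ssup N t g (t-1) := Ssup_anti hJmono h1.le hr hg
        have h3 : 0 ≤ c * Ssup N t f r := mul_nonneg hc0.le (Ssup_nonneg hJmono hJ0 hr hf)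
        simp only [hW0def]
        linarith
    have hW0bdd : BddAbove (W0 '' Set.Iio t) := by
      refine ⟨Ssup N t g (t-1), ?_⟩
      rintro x ⟨r, hr, rfl⟩
      exact hW0le r hr
    obtain ⟨L, hLdef⟩ : ∃ L : ℝ, L = sSup (W0 '' Set.Iio t) := ⟨_, rfl⟩
    obtain ⟨W, hWdef⟩ : ∃ W : ℝ → ℝ, W = fun r => if r < t then W0 r else L := ⟨_, rfl⟩
    have hWeq1 : ∀ r, r < t → W r = W0 r := by
      intro r hr; simp only [hWdef]; exact if_pos hr
    have hWeq2 : ∀ r, ¬ r < t → W r = L := by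
      intro r hr; simp only [hWdef]; exact if_neg hr
    have hWmono : Monotone W := by
      intro a b hab
      by_cases hb : b < t
      · rw [hWeq1 a (lt_of_le_of_lt hab hb), hWeq1 b hb]
        exact hW0mono a b hab hb
      · rw [hWeq2 b hb]
        by_cases ha : a < t
        · rw [hWeq1 a ha, hLdef]
          exact le_csSup hW0bdd ⟨a, ha, rfl⟩
        · rw [hWeq2 a ha]
    have hWrc : ∀ x, ContinuousWithinAt W (Set.Ici x) x := by
      intro x
      rcases lt_or_ge x t with hxt | htx
      · rw [Metric.continuousWithinAt_iff]
        intro ε hε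
        haveI : Nonempty (Set.Ioc x t : Set ℝ) := Set.nonempty_Ioc_subtype hxt
        have hlt : Ssup N t f x - ε / (2*c) < Ssup N t f x := by
          have : (0:ℝ) < ε / (2*c) := by positivity
          linarith
        obtain ⟨v, hv⟩ := exists_lt_of_lt_ciSup hlt
        refine ⟨(v:ℝ) - x, by linarith [v.2.1], ?_⟩
        intro y hy hdy
        have hxy : x ≤ y := hy
        have hyv : y < (v:ℝ) := by
          rw [Real.dist_eq, abs_of_nonneg (by linarith)] at hdy
          linarith
        have hyt : y < t := lt_of_lt_of_le hyv v.2.2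
        rw [Real.dist_eq, hWeq1 y hyt, hWeq1 x hxt]
        have hlow : W0 x ≤ W0 y := hW0mono x y hxy hyt
        have hup : W0 y ≤ W0 x + ε / 2 := by
          have h1 : Ssup N t g y ≤ Ssup N t g x := Ssup_anti hJmono hxy hyt hg
          have h2 : Ssup N t f x - ε/(2*c) < Jfun N (v:ℝ) t f := hv
          have h3 : Jfun N (v:ℝ) t f ≤ Ssup N t f y := le_Ssup hJmono hf ⟨hyv, v.2.2⟩
          have h4 : c * (Ssup N t f x - Ssup N t f y) ≤ c * (ε/(2*c)) :=
            mul_le_mul_of_nonneg_left (by linarith) hc0.le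
          have h5 : c * (ε / (2*c)) = ε / 2 := by field_simp
          rw [mul_sub] at h4
          simp only [hW0def]
          linarith
        rw [abs_lt]
        constructor <;> linarith
      · have hconst : ∀ y ∈ Set.Ici x, W y = L := fun y hy => hWeq2 y (not_lt.2 (le_trans htx hy))
        exact (continuousWithinAt_const (b := L)).congr hconst (hWeq2 x (not_lt.2 htx))
    set Wst : StieltjesFunction ℝ := ⟨W, hWmono, hWrc⟩ with hWstdef
    set ρ : Measure ℝ := Wst.measure with hρdef
    have hGg := hGfin t g hg
    have hGf := hGfin t f hf
    have hρc : IsFiniteMeasureOnCompacts ρ := by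
      haveI : IsLocallyFiniteMeasure ρ := by rw [hρdef]; infer_instance
      infer_instance
    have hsum_fc : IsFiniteMeasureOnCompacts (G t g + ρ) := by
      constructor
      intro K hK
      rw [Measure.coe_add, Pi.add_apply]
      exact ENNReal.add_lt_top.2 ⟨hGg.lt_top_of_isCompact hK, hρc.lt_top_of_isCompact hK⟩
    have hsm_fc : IsFiniteMeasureOnCompacts ((ENNReal.ofReal c) • G t f) := by
      constructor
      intro K hK
      rw [Measure.smul_apply, smul_eq_mul]
      exact ENNReal.mul_lt_top ENNReal.ofReal_lt_top (hGf.lt_top_of_isCompact hK)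
    have hWIoc : ∀ a b : ℝ, ρ (Set.Ioc a b) = ENNReal.ofReal (W b - W a) := by
      intro a b
      rw [hρdef]
      exact Wst.measure_Ioc a b
    have hrestr : (G t g + ρ).restrict (Set.Iio t)
        = ((ENNReal.ofReal c) • G t f).restrict (Set.Iio t) := by
      apply restrict_Iio_eq hsum_fc hsm_fc t
      intro a b hab hbt
      have hat : a < t := lt_of_le_of_lt hab hbt
      rw [Measure.coe_add, Pi.add_apply, hGS t g hg a b hab hbt, hWIoc a b,
        hWeq1 b hbt, hWeq1 a hat, Measure.smul_apply, smul_eq_mul,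
        hGS t f hf a b hab hbt]
      have hn1 : 0 ≤ Ssup N t g a - Ssup N t g b := by
        have := Ssup_anti hJmono hab hbt hg
        linarith
      have hn2 : 0 ≤ W0 b - W0 a := by
        have := hW0mono a b hab hbt
        linarith
      rw [← ENNReal.ofReal_add hn1 hn2, ← ENNReal.ofReal_mul hc0.le]
      congr 1
      simp only [hW0def]
      ring
    -- split A into the part below t and the atom at t
    have hA1 : MeasurableSet (A ∩ Set.Iio t) := hA.inter measurableSet_Iio
    have hA2 : MeasurableSet (A ∩ {t}) := hA.inter (measurableSet_singleton t)
    have hdisj : Disjoint (A ∩ Set.Iio t) (A ∩ {t}) := by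
      rw [Set.disjoint_iff]
      rintro x ⟨⟨_, hx1⟩, ⟨_, hx2⟩⟩
      simp only [Set.mem_singleton_iff] at hx2
      rw [Set.mem_Iio] at hx1
      subst hx2
      exact absurd hx1 (lt_irrefl _)
    have hcover : A ∩ Set.Iio t ∪ A ∩ {t} = A := by
      ext x
      constructor
      · rintro (⟨h1, _⟩ | ⟨h1, _⟩) <;> exact h1
      · intro hx
        have hxle : x ≤ t := hAt hx
        rcases lt_or_eq_of_le hxle with h1 | h1
        · exact Or.inl ⟨hx, Set.mem_Iio.mpr h1⟩
        · exact Or.inr ⟨hx, by simp [h1]⟩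
    have hsplit : ∀ φ : E → ℝ, G t φ A = G t φ (A ∩ Set.Iio t) + G t φ (A ∩ {t}) := by
      intro φ
      conv_lhs => rw [← hcover]
      rw [measure_union hdisj hA2]
    have hIio : G t g (A ∩ Set.Iio t) ≤ ENNReal.ofReal c * G t f (A ∩ Set.Iio t) := by
      have h1 : G t g (A ∩ Set.Iio t) ≤ (G t g + ρ) (A ∩ Set.Iio t) := by
        rw [Measure.coe_add, Pi.add_apply]
        exact le_self_add
      have h2 : (G t g + ρ) (A ∩ Set.Iio t) = ENNReal.ofReal c * G t f (A ∩ Set.Iio t) := by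
        have h3 := congrArg (fun m : Measure ℝ => m (A ∩ Set.Iio t)) hrestr
        simp only [Measure.restrict_apply hA1] at h3
        rw [Set.inter_assoc, Set.inter_self] at h3
        rw [h3, Measure.smul_apply, smul_eq_mul]
      rw [← h2]
      exact h1
    have hatom : G t g (A ∩ {t}) ≤ ENNReal.ofReal c * G t f (A ∩ {t}) := by
      by_cases htA : t ∈ A
      · have hAe : A ∩ {t} = {t} :=
          Set.inter_eq_self_of_subset_right (Set.singleton_subset_iff.2 htA)
        rw [hAe, hGatom t g hg, hGatom t f hf]
        haveI : Nonempty (Set.Iio t : Set ℝ) := ⟨⟨t-1, by simp only [Set.mem_Iio]; linarith⟩⟩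
        have hbg : BddBelow (Set.range fun r : (Set.Iio t : Set ℝ) => Jfun N (r:ℝ) t g) := by
          refine ⟨0, ?_⟩
          rintro x ⟨r, rfl⟩
          exact hJ0 (r:ℝ) t g r.2.le hg
        have hinf : (⨅ r : (Set.Iio t : Set ℝ), Jfun N (r:ℝ) t g)
            ≤ c * ⨅ r : (Set.Iio t : Set ℝ), Jfun N (r:ℝ) t f := by
          rw [← div_le_iff₀' hc0]
          apply le_ciInf
          intro r
          rw [div_le_iff₀ hc0]
          have h1 := ciInf_le hbg r
          have h2 := J_le_smul N hN hpos (r.2.le : (r:ℝ) ≤ t) hf hg hc hle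
          rw [mul_comm] at h2
          linarith
        calc ENNReal.ofReal (⨅ r : (Set.Iio t : Set ℝ), Jfun N (r:ℝ) t g)
            ≤ ENNReal.ofReal (c * ⨅ r : (Set.Iio t : Set ℝ), Jfun N (r:ℝ) t f) :=
              ENNReal.ofReal_le_ofReal hinf
          _ = ENNReal.ofReal c * ENNReal.ofReal (⨅ r : (Set.Iio t : Set ℝ), Jfun N (r:ℝ) t f) :=
              ENNReal.ofReal_mul hc0.le
      · have hAe : A ∩ {t} = ∅ := by
          ext x
          simp only [Set.mem_inter_iff, Set.mem_singleton_iff, Set.mem_empty_iff_false,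
            iff_false, not_and]
          intro hxA hxt
          subst hxt
          exact htA hxA
        rw [hAe]
        simp
    rw [hsplit g, hsplit f, mul_add]
    exact add_le_add hIio hatom
  -- part (ii)
  have hii : ∀ (t u : ℝ) (f : E → ℝ), t ≤ u → Bp f →
      ∀ A : Set ℝ, MeasurableSet A → A ⊆ Set.Iio t → G u f A = G t (V t u f) A := by
    intro t u f htu hf A hA hAt
    have hVf : Bp (V t u f) := hVBp t u f htu hf
    have key : ∀ r, r < t → Ssup N u f r = Ssup N t (V t u f) r + Jfun N t u f := by
      intro r hrt
      have hru : r < u := lt_of_lt_of_le hrt htu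
      apply le_antisymm
      · apply Ssup_le hru
        intro w hw
        rcases le_or_gt w t with hwt | htw
        · rw [J_decomp Q V N hQmar hQlap hVBp hN hpos hSCS hwt htu hf]
          have h1 : Jfun N w t (V t u f) ≤ Ssup N t (V t u f) r :=
            le_Ssup hJmono hVf ⟨hw.1, hwt⟩
          linarith
        · have h1 : Jfun N w u f ≤ Jfun N t u f := hJmono t w u f htw.le hw.2 hf
          have h2 : 0 ≤ Ssup N t (V t u f) r := Ssup_nonneg hJmono hJ0 hrt hVf
          linarith
      · have h3 : Ssup N t (V t u f) r ≤ Ssup N u f r - Jfun N t u f := by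
          apply Ssup_le hrt
          intro w hw
          have h4 := J_decomp Q V N hQmar hQlap hVBp hN hpos hSCS hw.2 htu hf
          have h5 : Jfun N w u f ≤ Ssup N u f r :=
            le_Ssup hJmono hf ⟨hw.1, le_trans hw.2 htu⟩
          linarith
        linarith
    have hIoc : ∀ a b, a ≤ b → b < t → G u f (Set.Ioc a b) = G t (V t u f) (Set.Ioc a b) := by
      intro a b hab hbt
      have hat : a < t := lt_of_le_of_lt hab hbt
      rw [hGS u f hf a b hab (lt_of_lt_of_le hbt htu), hGS t _ hVf a b hab hbt,
        key a hat, key b hbt]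
      congr 1
      ring
    have hre := restrict_Iio_eq (hGfin u f hf) (hGfin t _ hVf) t hIoc
    have h6 := congrArg (fun m : Measure ℝ => m A) hre
    simpa [Measure.restrict_apply hA, Set.inter_eq_self_of_subset_left hAt] using h6
  refine ⟨hi, hii, ?_⟩
  -- part (iii)
  intro t u f htu hf
  apply Measure.AbsolutelyContinuous.mk
  intro s hs hs0
  rw [Measure.restrict_apply hs] at hs0 ⊢
  obtain ⟨C, hC⟩ := (hVBp t u f htu hf).2.2
  set c : ℝ := max C 1 with hcdef
  have hc1 : 1 ≤ c := le_max_right _ _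
  have h2 := hii t u f htu hf (s ∩ Set.Iio t) (hs.inter measurableSet_Iio)
    Set.inter_subset_right
  have h1 := hi t (fun _ => (1:ℝ)) (V t u f) c bp_one (hVBp t u f htu hf) hc1
    (fun x => by
      have := hC x
      have h3 : C ≤ c := le_max_left _ _
      simp only [mul_one]
      linarith)
    (s ∩ Set.Iio t) (hs.inter measurableSet_Iio)
    (fun x hx => Set.mem_Iic.mpr (le_of_lt hx.2))
  rw [h2]
  have h4 : G t (fun _ => (1:ℝ)) (s ∩ Set.Iio t) = 0 := hs0
  refine le_antisymm ?_ zero_le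
  calc G t (V t u f) (s ∩ Set.Iio t)
      ≤ ENNReal.ofReal c * G t (fun _ => (1:ℝ)) (s ∩ Set.Iio t) := h1
    _ = 0 := by rw [h4, mul_zero]

end Main
end
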